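/- Let n ≥ 1 be an integer, z > 0 a real number, and p a complex number with Re p > 0. Then q ↦ q^{p−1} F_{n,z}(q) is integrable on (0,∞) and the Mellin transform of the mirror oscillatory integral of ℙⁿ is ∫_0^∞ q^{p−1} F_{n,z}(q) dq = z^{(n+1)p} · Γ(p)^{n+1}, where Γ is the complex Gamma function. -/

import Mathlib

open MeasureTheory

/-- Givental's mirror oscillatory integral of `ℙⁿ` over the positive real thimble. -/
noncomputable def mirrorOscIntegral (n : ℕ) (z q : ℝ) : ℝ :=
  ∫ x in Set.univ.pi fun _ : Fin n => Set.Ioi (0 : ℝ),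
    Real.exp (-(∑ i, x i + q / ∏ i, x i) / z) / ∏ i, x i

section Helpers

open Set Filter

lemma cexp_mul_log {t : ℝ} (ht : 0 < t) (w : ℂ) :
    Complex.exp (w * Real.log t) = (t : ℂ) ^ w := by
  rw [Complex.cpow_def_of_ne_zero (Complex.ofReal_ne_zero.mpr ht.ne'),
    ← Complex.ofReal_log ht.le, mul_comm]

lemma gammaC_integrableOn {p : ℂ} (hp : 0 < p.re) {r : ℝ} (hr : 0 < r) :
    IntegrableOn
      (fun t : ℝ => Complex.exp ((p - 1) * Real.log t) * (Real.exp (-(r * t)) : ℝ))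
      (Set.Ioi 0) := by
  have h0 := Complex.GammaIntegral_convergent hp
  rw [← mul_zero r, ← integrableOn_Ioi_comp_mul_left_iff _ _ hr] at h0
  have h1 := h0.const_mul (((r : ℂ) ^ (p - 1))⁻¹)
  refine IntegrableOn.congr_fun h1 (fun t ht => ?_) measurableSet_Ioi
  rw [Set.mem_Ioi] at ht
  have hrne : (r : ℂ) ^ (p - 1) ≠ 0 := by
    simp [Complex.cpow_eq_zero_iff, hr.ne']
  simp only [Complex.ofReal_mul, Complex.mul_cpow_ofReal_nonneg hr.le ht.le,
    cexp_mul_log ht]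
  field_simp

lemma gammaC_integral {p : ℂ} (hp : 0 < p.re) {r : ℝ} (hr : 0 < r) :
    ∫ t in Set.Ioi (0:ℝ), Complex.exp ((p - 1) * Real.log t) * (Real.exp (-(r * t)) : ℝ) =
      (1 / (r : ℂ)) ^ p * Complex.Gamma p := by
  rw [← Complex.integral_cpow_mul_exp_neg_mul_Ioi hp hr]
  refine setIntegral_congr_fun measurableSet_Ioi fun t ht => ?_
  rw [Set.mem_Ioi] at ht
  rw [cexp_mul_log ht, Complex.ofReal_exp]
  push_cast
  ring_nf

lemma gammaR_integrableOn {σ : ℝ} (hσ : 0 < σ) {r : ℝ} (hr : 0 < r) :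
    IntegrableOn (fun t : ℝ => t ^ (σ - 1) * Real.exp (-(r * t))) (Set.Ioi 0) := by
  have h0 := Real.GammaIntegral_convergent hσ
  rw [← mul_zero r, ← integrableOn_Ioi_comp_mul_left_iff _ _ hr] at h0
  have h1 := h0.const_mul ((r ^ (σ - 1))⁻¹)
  refine IntegrableOn.congr_fun h1 (fun t ht => ?_) measurableSet_Ioi
  rw [Set.mem_Ioi] at ht
  have hrne : r ^ (σ - 1) ≠ 0 := (Real.rpow_pos_of_pos hr _).ne'
  rw [Real.mul_rpow hr.le ht.le]
  field_simp

lemma norm_cexp_mul {p : ℂ} {t : ℝ} (ht : 0 < t) (y : ℝ) :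
    ‖Complex.exp ((p - 1) * Real.log t) * (Real.exp y : ℝ)‖ =
      t ^ (p.re - 1) * Real.exp y := by
  rw [norm_mul, Complex.norm_exp, Complex.norm_real,
    Real.norm_eq_abs, Real.abs_exp]
  congr 1
  rw [Real.rpow_def_of_pos ht]
  congr 1
  simp [Complex.mul_re]
  ring

lemma indicator_pi_prod {M : Type*} [CommMonoidWithZero M] {n : ℕ} (φ : ℝ → M) :
    (Set.univ.pi fun _ : Fin n => Set.Ioi (0:ℝ)).indicator
        (fun x => ∏ i, φ (x i)) =
      fun x => ∏ i, (Set.Ioi (0:ℝ)).indicator φ (x i) := by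
  funext x
  by_cases hx : x ∈ Set.univ.pi fun _ : Fin n => Set.Ioi (0:ℝ)
  · rw [Set.indicator_of_mem hx]
    exact Finset.prod_congr rfl fun i _ =>
      (Set.indicator_of_mem (hx i (Set.mem_univ i)) φ).symm
  · rw [Set.indicator_of_notMem hx]
    rw [Set.mem_pi] at hx
    push_neg at hx
    obtain ⟨i, -, hi⟩ := hx
    exact (Finset.prod_eq_zero (Finset.mem_univ i)
      (Set.indicator_of_notMem hi φ)).symm

end Helpers

/-- for `n ≥ 1`, `z > 0` and `Re p > 0`, the function
`q ↦ q^{p−1} F_{n,z}(q)` (with `q^{p−1} = exp((p−1) log q)`, real logarithm)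
is integrable on `(0,∞)` and its Mellin transform is
`∫₀^∞ q^{p−1} F_{n,z}(q) dq = z^{(n+1)p} Γ(p)^{n+1}`. -/
theorem mellin_mirrorOscIntegral (n : ℕ) (hn : 1 ≤ n) (z : ℝ) (hz : 0 < z)
    (p : ℂ) (hp : 0 < p.re) :
    IntegrableOn
      (fun q : ℝ => Complex.exp ((p - 1) * Real.log q) * (mirrorOscIntegral n z q : ℂ))
      (Set.Ioi (0 : ℝ)) volume ∧
    (∫ q in Set.Ioi (0 : ℝ),
        Complex.exp ((p - 1) * Real.log q) * (mirrorOscIntegral n z q : ℂ)) =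
      Complex.exp (((n : ℂ) + 1) * p * Real.log z) * Complex.Gamma p ^ (n + 1) := by
  classical
  have hzne : z ≠ 0 := hz.ne'
  set S := Set.univ.pi fun _ : Fin n => Set.Ioi (0:ℝ) with hSdef
  have hS : MeasurableSet S := MeasurableSet.univ_pi fun _ => measurableSet_Ioi
  set g : (Fin n → ℝ) → ℝ → ℂ := fun x q =>
    Complex.exp ((p - 1) * Real.log q) *
      ((Real.exp (-(∑ i, x i + q / ∏ i, x i) / z) / ∏ i, x i : ℝ) : ℂ) with hgdef
  -- splitting of the exponential for fixed x with positive product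
  have hsplit : ∀ x : Fin n → ℝ, 0 < ∏ i, x i → ∀ q : ℝ,
      g x q = ((Real.exp (-(∑ i, x i) / z) / ∏ i, x i : ℝ) : ℂ) *
        (Complex.exp ((p - 1) * Real.log q) *
          ((Real.exp (-((z * ∏ i, x i)⁻¹ * q)) : ℝ) : ℂ)) := by
    intro x hP q
    have h1 : -(∑ i, x i + q / ∏ i, x i) / z =
        -(∑ i, x i) / z + -((z * ∏ i, x i)⁻¹ * q) := by
      field_simp
      ring
    rw [hgdef]
    simp only
    rw [h1, Real.exp_add]
    push_cast
    ring
  -- positivity of the scale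
  have hrpos : ∀ x : Fin n → ℝ, 0 < ∏ i, x i → 0 < (z * ∏ i, x i)⁻¹ := by
    intro x hP; positivity
  -- measurability
  have hg_meas : AEStronglyMeasurable (Function.uncurry g)
      ((volume.restrict S).prod (volume.restrict (Set.Ioi (0:ℝ)))) := by
    apply Measurable.aestronglyMeasurable
    have hsum : Measurable fun xq : (Fin n → ℝ) × ℝ => ∑ i, xq.1 i :=
      Finset.measurable_sum _ fun i _ => (measurable_pi_apply i).comp measurable_fst
    have hprod : Measurable fun xq : (Fin n → ℝ) × ℝ => ∏ i, xq.1 i :=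
      Finset.measurable_prod _ fun i _ => (measurable_pi_apply i).comp measurable_fst
    apply Measurable.mul
    · exact Complex.measurable_exp.comp (measurable_const.mul
        (Complex.measurable_ofReal.comp (Real.measurable_log.comp measurable_snd)))
    · exact Complex.measurable_ofReal.comp
        ((Real.measurable_exp.comp
          (((hsum.add (measurable_snd.div hprod)).neg).div_const z)).div hprod)
  -- integrability of sections in q
  have hsec_int : ∀ x ∈ S, Integrable (g x) (volume.restrict (Set.Ioi (0:ℝ))) := by
    intro x hx
    have hP : 0 < ∏ i, x i := Finset.prod_pos fun i _ => hx i (Set.mem_univ i)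
    rw [funext (hsplit x hP)]
    exact ((gammaC_integrableOn hp (hrpos x hP)).const_mul _)
  -- value of the inner q integral
  have hq_val : ∀ x ∈ S, (∫ q in Set.Ioi (0:ℝ), g x q) =
      Complex.Gamma p * Complex.exp (p * Real.log z) *
        ∏ i, (Complex.exp ((p - 1) * Real.log (x i)) *
          ((Real.exp (-(z⁻¹ * x i)) : ℝ) : ℂ)) := by
    intro x hx
    have hxi : ∀ i, 0 < x i := fun i => hx i (Set.mem_univ i)
    have hP : 0 < ∏ i, x i := Finset.prod_pos fun i _ => hxi i
    have hPC : ((∏ i, x i : ℝ) : ℂ) ≠ 0 := Complex.ofReal_ne_zero.mpr hP.ne'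
    rw [funext (hsplit x hP), MeasureTheory.integral_const_mul,
      gammaC_integral hp (hrpos x hP)]
    have h1r : (1 : ℂ) / (((z * ∏ i, x i)⁻¹ : ℝ) : ℂ) = ((z * ∏ i, x i : ℝ) : ℂ) := by
      push_cast
      rw [one_div, inv_inv]
    rw [h1r]
    have hzP : 0 < z * ∏ i, x i := by positivity
    have hcp : ((z * ∏ i, x i : ℝ) : ℂ) ^ p =
        Complex.exp (p * Real.log z) *
          (Complex.exp ((p - 1) * Real.log (∏ i, x i)) * ((∏ i, x i : ℝ) : ℂ)) := by
      rw [← cexp_mul_log hzP p, Real.log_mul hzne hP.ne']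
      rw [show ((∏ i, x i : ℝ) : ℂ) = Complex.exp ((Real.log (∏ i, x i) : ℝ) : ℂ) by
        rw [← Complex.ofReal_exp, Real.exp_log hP]]
      rw [← Complex.exp_add, ← Complex.exp_add]
      congr 1
      push_cast
      ring
    have hlogprod : Real.log (∏ i, x i) = ∑ i, Real.log (x i) :=
      Real.log_prod fun i _ => (hxi i).ne'
    have hprodexp : Complex.exp ((p - 1) * (Real.log (∏ i, x i) : ℂ)) =
        ∏ i, Complex.exp ((p - 1) * (Real.log (x i) : ℂ)) := by
      rw [hlogprod]
      push_cast
      rw [Finset.mul_sum, Complex.exp_sum]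
    have hexpsum : Real.exp (-(∑ i, x i) / z) = ∏ i, Real.exp (-(z⁻¹ * x i)) := by
      rw [← Real.exp_sum]
      congr 1
      rw [neg_div, div_eq_inv_mul, Finset.mul_sum, ← Finset.sum_neg_distrib]
    rw [hcp, Complex.ofReal_div, hexpsum, Complex.ofReal_prod, hprodexp,
      Finset.prod_mul_distrib]
    rw [div_mul_eq_mul_div, div_eq_iff hPC]
    ring
  -- value of the inner q integral of norms
  have hq_norm : ∀ x ∈ S, (∫ q in Set.Ioi (0:ℝ), ‖g x q‖) =
      Real.Gamma p.re * Real.exp (p.re * Real.log z) *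
        ∏ i, (x i ^ (p.re - 1) * Real.exp (-(z⁻¹ * x i))) := by
    intro x hx
    have hxi : ∀ i, 0 < x i := fun i => hx i (Set.mem_univ i)
    have hP : 0 < ∏ i, x i := Finset.prod_pos fun i _ => hxi i
    have hzP : 0 < z * ∏ i, x i := by positivity
    have hnormpt : ∀ q ∈ Set.Ioi (0:ℝ), ‖g x q‖ =
        (Real.exp (-(∑ i, x i) / z) / ∏ i, x i) *
          (q ^ (p.re - 1) * Real.exp (-((z * ∏ i, x i)⁻¹ * q))) := by
      intro q hq
      rw [Set.mem_Ioi] at hq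
      rw [hsplit x hP q, norm_mul, Complex.norm_real, Real.norm_eq_abs,
        abs_of_pos (by positivity), norm_cexp_mul hq]
    rw [setIntegral_congr_fun measurableSet_Ioi hnormpt,
      MeasureTheory.integral_const_mul,
      Real.integral_rpow_mul_exp_neg_mul_Ioi hp (hrpos x hP),
      one_div, inv_inv]
    have hcpR : (z * ∏ i, x i) ^ p.re =
        Real.exp (p.re * Real.log z) *
          (Real.exp ((p.re - 1) * Real.log (∏ i, x i)) * ∏ i, x i) := by
      rw [Real.rpow_def_of_pos hzP, Real.log_mul hzne hP.ne',
        show (Real.log z + Real.log (∏ i, x i)) * p.re =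
          p.re * Real.log z +
            ((p.re - 1) * Real.log (∏ i, x i) + Real.log (∏ i, x i)) by ring,
        Real.exp_add, Real.exp_add, Real.exp_log hP]
    have hprodR : Real.exp ((p.re - 1) * Real.log (∏ i, x i)) =
        ∏ i, x i ^ (p.re - 1) := by
      rw [Real.finset_prod_rpow _ _ (fun i _ => (hxi i).le),
        Real.rpow_def_of_pos hP, mul_comm]
    have hexpsum : Real.exp (-(∑ i, x i) / z) = ∏ i, Real.exp (-(z⁻¹ * x i)) := by
      rw [← Real.exp_sum]
      congr 1
      rw [neg_div, div_eq_inv_mul, Finset.mul_sum, ← Finset.sum_neg_distrib]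
    rw [hcpR, hprodR, hexpsum, Finset.prod_mul_distrib,
      div_mul_eq_mul_div, div_eq_iff hP.ne']
    ring
  -- integrability of the norm-integral function
  have hprod_int : IntegrableOn
      (fun x : Fin n → ℝ => ∏ i, (x i ^ (p.re - 1) * Real.exp (-(z⁻¹ * x i)))) S := by
    have hind : Integrable
        ((Set.univ.pi fun _ : Fin n => Set.Ioi (0:ℝ)).indicator
          fun x => ∏ i, (x i ^ (p.re - 1) * Real.exp (-(z⁻¹ * x i)))) volume := by
      rw [indicator_pi_prod (fun t : ℝ => t ^ (p.re - 1) * Real.exp (-(z⁻¹ * t)))]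
      exact Integrable.fintype_prod (𝕜 := ℝ) fun _ =>
        (integrable_indicator_iff measurableSet_Ioi).mpr
          (gammaR_integrableOn hp (inv_pos.mpr hz))
    rw [hSdef]
    exact (integrable_indicator_iff
      (MeasurableSet.univ_pi fun _ => measurableSet_Ioi)).mp hind
  have hnormfun_int : Integrable (fun x => ∫ q in Set.Ioi (0:ℝ), ‖g x q‖)
      (volume.restrict S) := by
    have h := hprod_int.const_mul (Real.Gamma p.re * Real.exp (p.re * Real.log z))
    exact h.congr
      (by filter_upwards [ae_restrict_mem hS] with x hx using (hq_norm x hx).symm)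
  -- integrability on the product
  have H1 : Integrable (Function.uncurry g)
      ((volume.restrict S).prod (volume.restrict (Set.Ioi (0:ℝ)))) := by
    rw [MeasureTheory.integrable_prod_iff hg_meas]
    exact ⟨by filter_upwards [ae_restrict_mem hS] with x hx using hsec_int x hx,
      hnormfun_int⟩
  -- rewriting the Mellin integrand
  have hfun_eq : (fun q : ℝ =>
      Complex.exp ((p - 1) * Real.log q) * (mirrorOscIntegral n z q : ℂ)) =
      fun q => ∫ x, g x q ∂(volume.restrict S) := by
    funext q
    simp only [mirrorOscIntegral, hgdef]
    rw [show ((∫ x in Set.univ.pi fun _ : Fin n => Set.Ioi (0:ℝ),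
        Real.exp (-(∑ i, x i + q / ∏ i, x i) / z) / ∏ i, x i : ℝ) : ℂ) =
        ∫ x in Set.univ.pi fun _ : Fin n => Set.Ioi (0:ℝ),
          ((Real.exp (-(∑ i, x i + q / ∏ i, x i) / z) / ∏ i, x i : ℝ) : ℂ) from
      (integral_ofReal (𝕜 := ℂ)).symm, ← MeasureTheory.integral_const_mul]
  constructor
  · rw [IntegrableOn, hfun_eq]
    exact H1.integral_prod_right
  · have hswap := MeasureTheory.integral_integral_swap (f := g) H1
    rw [hfun_eq, ← hswap]
    rw [MeasureTheory.integral_congr_ae (g := fun x : Fin n → ℝ =>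
      Complex.Gamma p * Complex.exp (p * Real.log z) *
        ∏ i, (Complex.exp ((p - 1) * Real.log (x i)) *
          ((Real.exp (-(z⁻¹ * x i)) : ℝ) : ℂ)))
      (by filter_upwards [ae_restrict_mem hS] with x hx using hq_val x hx)]
    rw [MeasureTheory.integral_const_mul]
    have hPI : (∫ x in S, ∏ i, (Complex.exp ((p - 1) * Real.log (x i)) *
          ((Real.exp (-(z⁻¹ * x i)) : ℝ) : ℂ))) =
        (∫ t in Set.Ioi (0:ℝ), Complex.exp ((p - 1) * Real.log t) *
          ((Real.exp (-(z⁻¹ * t)) : ℝ) : ℂ)) ^ n := by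
      rw [← MeasureTheory.integral_indicator hS, hSdef,
        indicator_pi_prod (fun t : ℝ => Complex.exp ((p - 1) * Real.log t) *
          ((Real.exp (-(z⁻¹ * t)) : ℝ) : ℂ))]
      beta_reduce
      rw [MeasureTheory.volume_pi,
        MeasureTheory.integral_fintype_prod_eq_pow (ι := Fin n)
          ((Set.Ioi (0:ℝ)).indicator fun t : ℝ =>
            Complex.exp ((p - 1) * Real.log t) * ((Real.exp (-(z⁻¹ * t)) : ℝ) : ℂ)),
        MeasureTheory.integral_indicator measurableSet_Ioi, Fintype.card_fin]
    rw [hPI, gammaC_integral hp (inv_pos.mpr hz)]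
    have h1z : (1 : ℂ) / ((z⁻¹ : ℝ) : ℂ) = ((z : ℝ) : ℂ) := by
      push_cast
      rw [one_div, inv_inv]
    rw [h1z, ← cexp_mul_log hz p, mul_pow, ← Complex.exp_nat_mul,
      show ((n : ℂ) + 1) * p * (Real.log z : ℂ) =
        p * Real.log z + n * (p * Real.log z) by ring,
      Complex.exp_add]
    ring
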